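/- (Continuity of the guessing probability at a unique point of maximal Bell violation.) Let K be a compact convex subset of a finite-dimensional real normed vector space E, let f : E → ℝ be continuous on K and convex on K, and define G : K → ℝ by G(x) := sup{ ∑ q_i f(e_i) : k ∈ ℕ, e_i ∈ extremePoints(K), q_i ≥ 0, ∑ q_i = 1, ∑ q_i e_i = x }. Let ℓ : E → ℝ be a continuous linear functional and suppose there is a unique point x* ∈ K at which ℓ attains its maximum t_max over K. Then G(x*) = f(x*) and for every ε > 0 there exists δ > 0 such that every x ∈ K with ℓ(x) ≥ t_max − δ satisfies |G(x) − f(x*)| ≤ ε. In particular, as the Bell value ℓ(x) tends to its maximum t_max, the guessing probability G(x) tends to its value at the maximally violating point. -/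

import Mathlib

open scoped BigOperators
open Set Module

lemma lim_le {A B : ℝ} (h : ∀ t : ℝ, t ∈ Set.Ioo (0:ℝ) 1 → (1-t)*A + t*B < 0) : B ≤ 0 := by
  by_contra hB
  push_neg at hB
  set t : ℝ := max (1/2) (1 - B/(2*(|A|+1))) with ht
  have hA1 : (0:ℝ) < |A| + 1 := by positivity
  have habs : -(|A|) ≤ A := neg_abs_le A
  have ht1 : t < 1 := by
    apply max_lt (by norm_num)
    have : 0 < B/(2*(|A|+1)) := by positivity
    linarith
  have ht0 : (1/2 : ℝ) ≤ t := le_max_left _ _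
  have h1t : 1 - t ≤ B/(2*(|A|+1)) := by
    have := le_max_right (1/2 : ℝ) (1 - B/(2*(|A|+1)))
    linarith
  have := h t ⟨by linarith, ht1⟩
  have h2 : (1-t)*A ≥ -(B/2) := by
    have h1t' : (0:ℝ) ≤ 1 - t := by linarith
    have : (1-t)*(-(|A|)) ≤ (1-t)*A := by nlinarith
    have hb2 : (1-t)*(|A|) ≤ (B/(2*(|A|+1)))*(|A|+1) := by
      apply mul_le_mul h1t (by linarith) (abs_nonneg A) (by positivity)
    have : (B/(2*(|A|+1)))*(|A|+1) = B/2 := by field_simp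
    nlinarith [abs_nonneg A]
  nlinarith

lemma bd {E : Type*} [NormedAddCommGroup E] [NormedSpace ℝ E] [FiniteDimensional ℝ E]
    (K : Set E) (hKc : IsCompact K) (hKconv : Convex ℝ K) (n : ℕ)
    (hn : finrank ℝ (vectorSpan ℝ K) = n)
    (IH : ∀ m, m < n → ∀ K' : Set E, IsCompact K' → Convex ℝ K' →
      finrank ℝ (vectorSpan ℝ K') = m → K' ⊆ convexHull ℝ (K'.extremePoints ℝ))
    (v : E) (hvV : v ∈ vectorSpan ℝ K) (hv0 : v ≠ 0) (z' : E) (hz' : z' ∈ K)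
    (hout : ∀ t : ℝ, 0 < t → z' + t • v ∉ K) :
    z' ∈ convexHull ℝ (K.extremePoints ℝ) := by
  classical
  set V : Submodule ℝ E := vectorSpan ℝ K with hV
  set K' : Set ↥V := {w : V | z' + (w : E) ∈ K} with hK'
  have hK'conv : Convex ℝ K' := by
    intro w1 hw1 w2 hw2 a b ha hb hab
    have hb' : b = 1 - a := by linarith
    subst hb'
    have heq : z' + ((a • w1 + (1-a) • w2 : V) : E)
        = a • (z' + (w1:E)) + (1-a) • (z' + (w2:E)) := by
      push_cast
      module
    show z' + ((a • w1 + (1-a) • w2 : V) : E) ∈ K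
    rw [heq]
    exact hKconv hw1 hw2 ha hb (by linarith)
  have h0K' : (0 : V) ∈ K' := by simpa [hK'] using hz'
  -- affine span of K' is top
  have hspan : affineSpan ℝ K' = ⊤ := by
    rw [AffineSubspace.affineSpan_eq_top_iff_vectorSpan_eq_top_of_nonempty ℝ ↥V ↥V ⟨0, h0K'⟩]
    have hinj : Function.Injective (V.subtype) := Subtype.coe_injective
    apply Submodule.map_injective_of_injective hinj
    rw [vectorSpan_def, ← Submodule.span_image, Submodule.map_top, Submodule.range_subtype]
    have himg : (V.subtype) '' (K' -ᵥ K') = K -ᵥ K := by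
      ext u
      constructor
      · rintro ⟨w, ⟨w1, hw1, w2, hw2, rfl⟩, rfl⟩
        exact ⟨z' + (w1:E), hw1, z' + (w2:E), hw2, by simp [vsub_eq_sub]⟩
      · rintro ⟨y, hy, z, hz, rfl⟩
        have hyV : y - z' ∈ V := vsub_mem_vectorSpan ℝ hy hz'
        have hzV : z - z' ∈ V := vsub_mem_vectorSpan ℝ hz hz'
        refine ⟨(⟨y - z', hyV⟩ : V) -ᵥ (⟨z - z', hzV⟩ : V), ⟨⟨y - z', hyV⟩, by simp [hK', hy], ⟨z - z', hzV⟩, by simp [hK', hz], rfl⟩, ?_⟩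
        simp [vsub_eq_sub]
    rw [himg, ← vectorSpan_def, ← hV]
  have hint : (interior K').Nonempty := by
    rw [hK'conv.interior_nonempty_iff_affineSpan_eq_top]
    exact hspan
  have h0ni : (0 : V) ∉ interior K' := by
    intro h0
    obtain ⟨ε, hε, hball⟩ := Metric.isOpen_iff.1 isOpen_interior 0 h0
    set t : ℝ := ε / (2 * ‖v‖) with htdef
    have hvn : (0:ℝ) < ‖v‖ := norm_pos_iff.2 hv0
    have ht : 0 < t := by positivity
    have hw : (t • (⟨v, hvV⟩ : V)) ∈ Metric.ball (0:V) ε := by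
      rw [mem_ball_zero_iff]
      have : ‖t • (⟨v, hvV⟩ : V)‖ = t * ‖v‖ := by
        rw [norm_smul, Real.norm_eq_abs, abs_of_pos ht]
        rfl
      rw [this]
      have : t * ‖v‖ = ε/2 := by rw [htdef]; field_simp
      rw [this]; linarith
    have := interior_subset (hball hw)
    have hmem : z' + t • v ∈ K := by simpa [hK'] using this
    exact hout t ht hmem
  obtain ⟨m, hm⟩ := geometric_hahn_banach_open_point (hK'conv.interior (𝕜 := ℝ)) isOpen_interior h0ni
  have hm0 : ∀ w ∈ interior K', m w < 0 := by
    intro w hw; have := hm w hw; simpa using this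
  obtain ⟨w₀, hw₀⟩ := hint
  have hmK' : ∀ w ∈ K', m w ≤ 0 := by
    intro w hw
    apply lim_le (A := m w₀) (B := m w)
    intro t ht
    have hmem : (1-t) • w₀ + t • w ∈ interior K' :=
      hK'conv.combo_interior_closure_mem_interior hw₀ (subset_closure hw)
        (by linarith [ht.2]) (le_of_lt ht.1) (by ring)
    have := hm0 _ hmem
    simpa [map_add, map_smul, smul_eq_mul] using this
  -- extend m to E
  obtain ⟨g, hg, -⟩ := exists_extension_norm_eq V m
  -- g is maximized on K at z'
  have hgmax : ∀ y ∈ K, g y ≤ g z' := by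
    intro y hy
    have hyV : y - z' ∈ V := vsub_mem_vectorSpan ℝ hy hz'
    have hmem : (⟨y - z', hyV⟩ : V) ∈ K' := by simp [hK', hy]
    have := hmK' _ hmem
    rw [← hg] at this
    simp only [Submodule.coe_mk] at this
    have h2 : g (y - z') = g y - g z' := map_sub g y z'
    rw [h2] at this
    linarith
  set F : Set E := {y ∈ K | ∀ w ∈ K, g w ≤ g y} with hF
  have hz'F : z' ∈ F := ⟨hz', hgmax⟩
  have hexp : IsExposed ℝ K F := fun _ => ⟨g, rfl⟩
  have hFext : IsExtreme ℝ K F := hexp.isExtreme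
  have hFclosed : IsClosed F := hexp.isClosed hKc.isClosed
  have hFc : IsCompact F := hKc.of_isClosed_subset hFclosed (sep_subset _ _)
  have hFconv : Convex ℝ F := hexp.convex hKconv
  -- rank drop
  have hw₀K' : w₀ ∈ K' := interior_subset hw₀
  have hgw₀ : g (w₀ : E) < 0 := by rw [hg]; exact hm0 _ hw₀
  set W : Submodule ℝ E := V ⊓ LinearMap.ker (g : E →ₗ[ℝ] ℝ) with hW
  have hWV : W < V := by
    refine lt_of_le_of_ne inf_le_left ?_
    intro hWeq
    have : (w₀ : E) ∈ W := by rw [hWeq]; exact w₀.2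
    have : g (w₀ : E) = 0 := this.2
    linarith
  have hFW : vectorSpan ℝ F ≤ W := by
    rw [vectorSpan_def, Submodule.span_le]
    rintro u ⟨y, hy, z, hz, rfl⟩
    have hgy : g y = g z' := le_antisymm (hgmax y hy.1) (hy.2 z' hz')
    have hgz : g z = g z' := le_antisymm (hgmax z hz.1) (hz.2 z' hz')
    constructor
    · exact vsub_mem_vectorSpan ℝ (hFext.1 hy) (hFext.1 hz)
    · show g (y -ᵥ z) = 0
      rw [vsub_eq_sub, map_sub, hgy, hgz, sub_self]
  have hrank : finrank ℝ (vectorSpan ℝ F) < n := by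
    calc finrank ℝ (vectorSpan ℝ F) ≤ finrank ℝ W := Submodule.finrank_mono hFW
    _ < finrank ℝ V := Submodule.finrank_lt_finrank_of_lt hWV
    _ = n := hn
  have := IH _ hrank F hFc hFconv rfl hz'F
  exact convexHull_mono (hFext.extremePoints_subset_extremePoints) this

theorem minkowski {E : Type*} [NormedAddCommGroup E] [NormedSpace ℝ E] [FiniteDimensional ℝ E]
    (K : Set E) (hKc : IsCompact K) (hKconv : Convex ℝ K) :
    K ⊆ convexHull ℝ (K.extremePoints ℝ) := by
  generalize hn : finrank ℝ (vectorSpan ℝ K) = n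
  induction n using Nat.strong_induction_on generalizing K with
  | _ n IH =>
  intro x hx
  by_cases hxe : x ∈ K.extremePoints ℝ
  · exact subset_convexHull ℝ _ hxe
  rw [mem_extremePoints] at hxe
  push_neg at hxe
  obtain ⟨y, hy, z, hz, hseg, hne⟩ := hxe hx
  obtain ⟨a, b, ha, hb, hab, hcomb⟩ := hseg
  have hb' : b = 1 - a := by linarith
  subst hb'
  have hyx : y ≠ x := by
    rintro rfl
    apply hne rfl
    have : (1-a) • z = (1-a) • y := by
      have : a • y + (1-a) • z = (a + (1-a)) • y := by rw [hab, one_smul, hcomb]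
      rw [add_smul] at this
      exact add_left_cancel this
    exact smul_right_injective E (ne_of_gt hb) this
  set v : E := z - y with hvdef
  have hv0 : v ≠ 0 := by
    intro h
    have hzy : z = y := by rwa [hvdef, sub_eq_zero] at h
    apply hyx
    rw [hzy] at hcomb
    rw [← hcomb, ← add_smul, hab, one_smul]
  have hvV : v ∈ vectorSpan ℝ K := vsub_mem_vectorSpan ℝ hz hy
  set T : Set ℝ := {t : ℝ | x + t • v ∈ K} with hT
  have h0T : (0:ℝ) ∈ T := by simp [hT, hx]
  have haT : a ∈ T := by
    have : x + a • v = z := by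
      rw [hvdef, ← hcomb]; module
    simp only [hT, mem_setOf_eq, this]; exact hz
  have hbT : -(1-a) ∈ T := by
    have : x + (-(1-a)) • v = y := by
      rw [hvdef, ← hcomb]; module
    simp only [hT, mem_setOf_eq, this]; exact hy
  have hTclosed : IsClosed T := by
    have : T = (fun t : ℝ => x + t • v) ⁻¹' K := rfl
    rw [this]
    exact IsClosed.preimage (by fun_prop) hKc.isClosed
  obtain ⟨r, hr⟩ := hKc.isBounded.subset_closedBall x
  have hvn : (0:ℝ) < ‖v‖ := norm_pos_iff.2 hv0
  have hTb : ∀ t ∈ T, |t| ≤ r / ‖v‖ := by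
    intro t ht
    have : ‖(x + t • v) - x‖ ≤ r := by
      have := hr ht
      rwa [Metric.mem_closedBall, dist_eq_norm] at this
    rw [add_sub_cancel_left, norm_smul, Real.norm_eq_abs] at this
    rw [le_div_iff₀ hvn]
    exact this
  have hTba : BddAbove T := ⟨r/‖v‖, fun t ht => (abs_le.1 (hTb t ht)).2⟩
  have hTbb : BddBelow T := ⟨-(r/‖v‖), fun t ht => (abs_le.1 (hTb t ht)).1⟩
  have hTne : T.Nonempty := ⟨0, h0T⟩
  set tM : ℝ := sSup T with htM
  set tm : ℝ := sInf T with htm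
  have htMT : tM ∈ T := hTclosed.csSup_mem hTne hTba
  have htmT : tm ∈ T := hTclosed.csInf_mem hTne hTbb
  have htMpos : 0 < tM := lt_of_lt_of_le ha (le_csSup hTba haT)
  have htmneg : tm < 0 := lt_of_le_of_lt (csInf_le hTbb hbT) (by linarith)
  set z₁ : E := x + tM • v with hz₁
  set y₁ : E := x + tm • v with hy₁
  have hz₁out : ∀ t : ℝ, 0 < t → z₁ + t • v ∉ K := by
    intro t ht hmem
    have : tM + t ∈ T := by
      show x + (tM + t) • v ∈ K
      rw [add_smul, ← add_assoc]
      exact hmem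
    have := le_csSup hTba this
    linarith
  have hy₁out : ∀ t : ℝ, 0 < t → y₁ + t • (-v) ∉ K := by
    intro t ht hmem
    have : tm - t ∈ T := by
      show x + (tm - t) • v ∈ K
      rw [sub_smul, ← add_sub_assoc]
      have : y₁ + t • (-v) = x + tm • v - t • v := by rw [hy₁]; module
      rwa [this] at hmem
    have := csInf_le hTbb this
    linarith
  have hz₁hull : z₁ ∈ convexHull ℝ (K.extremePoints ℝ) :=
    bd K hKc hKconv n hn IH v hvV hv0 z₁ htMT hz₁out
  have hy₁hull : y₁ ∈ convexHull ℝ (K.extremePoints ℝ) :=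
    bd K hKc hKconv n hn IH (-v) (Submodule.neg_mem _ hvV) (neg_ne_zero.2 hv0) y₁ htmT hy₁out
  -- x is a convex combination of y₁ and z₁
  set c : ℝ := tM / (tM - tm) with hc
  have hd : 0 < tM - tm := by linarith
  have hc0 : 0 ≤ c := le_of_lt (by positivity)
  have hc1 : 0 ≤ 1 - c := by
    rw [hc]
    have : tM / (tM - tm) ≤ 1 := by
      rw [div_le_one hd]; linarith
    linarith
  have hxcomb : c • y₁ + (1 - c) • z₁ = x := by
    rw [hy₁, hz₁, hc]
    have h1 : (tM / (tM - tm)) * tm + (1 - tM / (tM - tm)) * tM = 0 := by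
      field_simp
      ring
    have expand : (tM / (tM - tm)) • (x + tm • v) + (1 - tM / (tM - tm)) • (x + tM • v)
        = x + ((tM / (tM - tm)) * tm + (1 - tM / (tM - tm)) * tM) • v := by
      module
    rw [expand, h1, zero_smul, add_zero]
  rw [← hxcomb]
  exact (convex_convexHull ℝ _) hy₁hull hz₁hull hc0 hc1 (by ring)

lemma decomp {E : Type*} [NormedAddCommGroup E] [NormedSpace ℝ E] [FiniteDimensional ℝ E]
    (K : Set E) (hKc : IsCompact K) (hKconv : Convex ℝ K) {x : E} (hx : x ∈ K) :
    ∃ (k : ℕ) (e : Fin k → E) (q : Fin k → ℝ),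
      (∀ i, e i ∈ Set.extremePoints ℝ K) ∧ (∀ i, 0 ≤ q i) ∧ ∑ i, q i = 1 ∧
      ∑ i, q i • e i = x := by
  classical
  have hmem := minkowski K hKc hKconv hx
  rw [convexHull_eq] at hmem
  obtain ⟨ι, t, w, zz, hw0, hw1, hzs, hcm⟩ := hmem
  rw [Finset.centerMass_eq_of_sum_1 _ _ hw1] at hcm
  refine ⟨t.card, fun i => zz (t.equivFin.symm i), fun i => w (t.equivFin.symm i), ?_, ?_, ?_, ?_⟩
  · intro i
    exact hzs _ (t.equivFin.symm i).2
  · intro i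
    exact hw0 _ (t.equivFin.symm i).2
  · rw [← hw1, ← Finset.sum_coe_sort t w]
    exact Fintype.sum_equiv t.equivFin.symm (fun i => w ↑(t.equivFin.symm i)) (fun j => w ↑j)
      (fun i => rfl)
  · rw [← hcm, ← Finset.sum_coe_sort t (fun j => w j • zz j)]
    exact Fintype.sum_equiv t.equivFin.symm _ _ (fun i => rfl)

theorem guessing_probability_continuous_at_unique_max_violation
    {E : Type*} [NormedAddCommGroup E] [NormedSpace ℝ E] [FiniteDimensional ℝ E]
    (K : Set E) (hKc : IsCompact K) (hKconv : Convex ℝ K)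
    (f : E → ℝ) (hf : ContinuousOn f K) (hfconv : ConvexOn ℝ K f)
    (G : E → ℝ)
    (hG : ∀ x : E, G x =
      sSup {r : ℝ | ∃ (k : ℕ) (e : Fin k → E) (q : Fin k → ℝ),
        (∀ i, e i ∈ Set.extremePoints ℝ K) ∧ (∀ i, 0 ≤ q i) ∧ ∑ i, q i = 1 ∧
        ∑ i, q i • e i = x ∧ ∑ i, q i * f (e i) = r})
    (ℓ : E →L[ℝ] ℝ) (xstar : E) (hxstar : xstar ∈ K)
    (hmax : ∀ x ∈ K, ℓ x ≤ ℓ xstar)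
    (hunique : ∀ x ∈ K, ℓ x = ℓ xstar → x = xstar) :
    G xstar = f xstar ∧
      ∀ ε > (0 : ℝ), ∃ δ > (0 : ℝ), ∀ x ∈ K, ℓ xstar - δ ≤ ℓ x →
        |G x - f xstar| ≤ ε := by
  classical
  set S : E → Set ℝ := fun x => {r : ℝ | ∃ (k : ℕ) (e : Fin k → E) (q : Fin k → ℝ),
        (∀ i, e i ∈ Set.extremePoints ℝ K) ∧ (∀ i, 0 ≤ q i) ∧ ∑ i, q i = 1 ∧
        ∑ i, q i • e i = x ∧ ∑ i, q i * f (e i) = r} with hS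
  -- max of f on K
  obtain ⟨p, hpK, hpmax⟩ := hKc.exists_isMaxOn ⟨xstar, hxstar⟩ hf
  set M : ℝ := f p with hM
  have hMb : ∀ y ∈ K, f y ≤ M := fun y hy => hpmax hy
  -- key sum identity
  have key1 : ∀ (x : E) (k : ℕ) (e : Fin k → E) (q : Fin k → ℝ),
      (∀ i, 0 ≤ q i) → ∑ i, q i = 1 → ∑ i, q i • e i = x →
      ∑ i, q i * (ℓ xstar - ℓ (e i)) = ℓ xstar - ℓ x := by
    intro x k e q hq0 hq1 hqe
    have hlx : ∑ i, q i * ℓ (e i) = ℓ x := by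
      rw [← hqe, map_sum]
      exact Finset.sum_congr rfl fun i _ => by rw [map_smul]; rfl
    calc ∑ i, q i * (ℓ xstar - ℓ (e i))
        = (∑ i, q i) * ℓ xstar - ∑ i, q i * ℓ (e i) := by
          rw [Finset.sum_mul, ← Finset.sum_sub_distrib]
          exact Finset.sum_congr rfl fun i _ => by ring
      _ = ℓ xstar - ℓ x := by rw [hq1, hlx, one_mul]
  -- every element of S x is at most M, if elements decompose a point
  have hbdd : ∀ x : E, BddAbove (S x) := by
    intro x
    refine ⟨M, ?_⟩
    rintro r ⟨k, e, q, he, hq0, hq1, -, rfl⟩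
    calc ∑ i, q i * f (e i) ≤ ∑ i, q i * M := by
          apply Finset.sum_le_sum
          intro i _
          exact mul_le_mul_of_nonneg_left (hMb _ (extremePoints_subset (he i))) (hq0 i)
      _ = M := by rw [← Finset.sum_mul, hq1, one_mul]
  -- S x is nonempty for x ∈ K
  have hne : ∀ x ∈ K, (S x).Nonempty := by
    intro x hx
    obtain ⟨k, e, q, he, hq0, hq1, hqe⟩ := decomp K hKc hKconv hx
    exact ⟨∑ i, q i * f (e i), k, e, q, he, hq0, hq1, hqe, rfl⟩
  -- G x ≥ f x on K (Jensen)
  have hjensen : ∀ x ∈ K, f x ≤ G x := by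
    intro x hx
    obtain ⟨r, hr⟩ := hne x hx
    have hrS := hr
    obtain ⟨k, e, q, he, hq0, hq1, hqe, hrv⟩ := hr
    have : f x ≤ r := by
      rw [← hrv, ← hqe]
      have := hfconv.map_sum_le (t := Finset.univ) (w := q) (p := e)
        (fun i _ => hq0 i) hq1 (fun i _ => extremePoints_subset (he i))
      simpa [smul_eq_mul] using this
    rw [hG x]
    exact this.trans (le_csSup (hbdd x) hrS)
  -- xstar is an extreme point
  have hxe : xstar ∈ K.extremePoints ℝ := by
    rw [mem_extremePoints]
    refine ⟨hxstar, ?_⟩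
    intro x₁ h₁ x₂ h₂ hseg
    obtain ⟨a, b, ha, hb, hab, hcomb⟩ := hseg
    have hl1 : ℓ x₁ ≤ ℓ xstar := hmax _ h₁
    have hl2 : ℓ x₂ ≤ ℓ xstar := hmax _ h₂
    have hsum : a * ℓ x₁ + b * ℓ x₂ = ℓ xstar := by
      rw [← hcomb]; simp [map_add, map_smul]
    have hLL : a * ℓ xstar + b * ℓ xstar = ℓ xstar := by rw [← add_mul, hab, one_mul]
    have he1 : ℓ x₁ = ℓ xstar := by
      refine le_antisymm hl1 ?_
      have h : a * ℓ xstar ≤ a * ℓ x₁ := by linarith [mul_le_mul_of_nonneg_left hl2 hb.le]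
      exact le_of_mul_le_mul_left h ha
    have he2 : ℓ x₂ = ℓ xstar := by
      refine le_antisymm hl2 ?_
      have h : b * ℓ xstar ≤ b * ℓ x₂ := by linarith [mul_le_mul_of_nonneg_left hl1 ha.le]
      exact le_of_mul_le_mul_left h hb
    exact ⟨hunique _ h₁ he1, hunique _ h₂ he2⟩
  -- every element of S xstar equals f xstar
  have hSstar : ∀ r ∈ S xstar, r = f xstar := by
    rintro r ⟨k, e, q, he, hq0, hq1, hqe, rfl⟩
    have hzero := key1 xstar k e q hq0 hq1 hqe
    rw [sub_self] at hzero
    have hterm : ∀ i ∈ Finset.univ, q i * (ℓ xstar - ℓ (e i)) = 0 := by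
      rw [← Finset.sum_eq_zero_iff_of_nonneg]
      · exact hzero
      · intro i _
        have := hmax _ (extremePoints_subset (he i))
        have := hq0 i
        nlinarith
    have : ∀ i, q i * f (e i) = q i * f xstar := by
      intro i
      rcases eq_or_ne (q i) 0 with h | h
      · rw [h, zero_mul, zero_mul]
      · have := hterm i (Finset.mem_univ i)
        have hle : ℓ (e i) = ℓ xstar := by
          rcases mul_eq_zero.1 this with h' | h'
          · exact absurd h' h
          · linarith
        rw [hunique _ (extremePoints_subset (he i)) hle]
    calc ∑ i, q i * f (e i) = ∑ i, q i * f xstar := Finset.sum_congr rfl fun i _ => this i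
      _ = f xstar := by rw [← Finset.sum_mul, hq1, one_mul]
  have hfstarS : f xstar ∈ S xstar := by
    refine ⟨1, fun _ => xstar, fun _ => 1, fun _ => hxe, fun _ => zero_le_one, ?_, ?_, ?_⟩ <;> simp
  have part1 : G xstar = f xstar := by
    rw [hG xstar]
    exact le_antisymm (csSup_le ⟨f xstar, hfstarS⟩ (fun r hr => le_of_eq (hSstar r hr)))
      (le_csSup (hbdd xstar) hfstarS)
  refine ⟨part1, ?_⟩
  -- neighborhood lemma
  have near : ∀ r : ℝ, 0 < r → ∃ δ : ℝ, 0 < δ ∧ ∀ x ∈ K, ℓ xstar - δ ≤ ℓ x → ‖x - xstar‖ < r := by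
    intro r hrp
    set K'' : Set E := K ∩ {y | r ≤ ‖y - xstar‖} with hK''
    have hK''c : IsCompact K'' := by
      apply hKc.of_isClosed_subset  ?_ (inter_subset_left)
      apply IsClosed.inter hKc.isClosed
      have : IsClosed {y : E | r ≤ ‖y - xstar‖} :=
        isClosed_le continuous_const (by fun_prop)
      exact this
    rcases K''.eq_empty_or_nonempty with hemp | hnemp
    · refine ⟨1, one_pos, ?_⟩
      intro x hxK hlx
      by_contra hcon
      push_neg at hcon
      have : x ∈ K'' := ⟨hxK, hcon⟩
      rw [hemp] at this
      exact this
    · obtain ⟨y₀, hy₀K, hy₀max⟩ := hK''c.exists_isMaxOn hnemp ℓ.continuous.continuousOn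
      have hy₀lt : ℓ y₀ < ℓ xstar := by
        rcases lt_or_eq_of_le (hmax _ hy₀K.1) with h | h
        · exact h
        · exfalso
          have := hunique _ hy₀K.1 h
          rw [this] at hy₀K
          have := hy₀K.2
          simp only [mem_setOf_eq, sub_self, norm_zero] at this
          linarith
      refine ⟨(ℓ xstar - ℓ y₀)/2, by linarith, ?_⟩
      intro x hxK hlx
      by_contra hcon
      push_neg at hcon
      have hxK'' : x ∈ K'' := ⟨hxK, hcon⟩
      have h' : ℓ x ≤ ℓ y₀ := hy₀max hxK''
      linarith
  intro ε hε
  -- continuity of f at xstar within K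
  have hcont := (hf xstar hxstar)
  rw [Metric.continuousWithinAt_iff] at hcont
  obtain ⟨r, hrp, hr⟩ := hcont (ε/2) (by linarith)
  obtain ⟨δ₁, hδ₁p, hδ₁⟩ := near r hrp
  set C : ℝ := M - f xstar + 1 with hC
  have hCp : 0 < C := by
    have := hMb xstar hxstar
    rw [hC]; linarith
  set δ : ℝ := min δ₁ (δ₁ * ε / (2 * C)) with hδ
  have hδp : 0 < δ := lt_min hδ₁p (by positivity)
  refine ⟨δ, hδp, ?_⟩
  intro x hxK hlx
  have hxnear : ‖x - xstar‖ < r := hδ₁ x hxK (by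
    have : δ ≤ δ₁ := min_le_left _ _
    linarith)
  have hfx : |f x - f xstar| < ε/2 := by
    have := hr hxK (by rwa [dist_eq_norm])
    rwa [Real.dist_eq] at this
  -- upper bound for G x
  have hub : G x ≤ f xstar + ε := by
    rw [hG x]
    apply csSup_le (hne x hxK)
    rintro r' ⟨k, e, q, he, hq0, hq1, hqe, rfl⟩
    have hkey := key1 x k e q hq0 hq1 hqe
    have hsum_le : ℓ xstar - ℓ x ≤ δ := by linarith
    -- pointwise bound
    have hpt : ∀ i, q i * (f (e i) - f xstar) ≤
        q i * (ε/2) + (q i * (ℓ xstar - ℓ (e i))) * (C/δ₁) := by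
      intro i
      have heK : e i ∈ K := extremePoints_subset (he i)
      have hlei : ℓ (e i) ≤ ℓ xstar := hmax _ heK
      have hqi := hq0 i
      rcases lt_or_ge (ℓ xstar - ℓ (e i)) δ₁ with hgood | hbad
      · have hnear : ‖e i - xstar‖ < r := hδ₁ _ heK (by linarith)
        have : |f (e i) - f xstar| < ε/2 := by
          have := hr heK (by rwa [dist_eq_norm])
          rwa [Real.dist_eq] at this
        have h1 : f (e i) - f xstar ≤ ε/2 := le_of_lt (abs_lt.1 this).2
        have h2 : 0 ≤ (q i * (ℓ xstar - ℓ (e i))) * (C/δ₁) :=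
          mul_nonneg (mul_nonneg hqi (by linarith)) (by positivity)
        nlinarith
      · have h1 : f (e i) - f xstar ≤ C := by
          have := hMb _ heK
          rw [hC]; linarith
        have h2 : 0 ≤ q i * (ε/2) := by positivity
        have h3 : q i * (f (e i) - f xstar) ≤ q i * C :=
          mul_le_mul_of_nonneg_left h1 hqi
        have h4 : q i * C = q i * δ₁ * (C/δ₁) := by
          field_simp
        have h5 : q i * δ₁ * (C/δ₁) ≤ q i * (ℓ xstar - ℓ (e i)) * (C/δ₁) := by
          apply mul_le_mul_of_nonneg_right _ (by positivity)
          exact mul_le_mul_of_nonneg_left hbad hqi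
        nlinarith
    have hsum : ∑ i, q i * (f (e i) - f xstar) ≤ ε/2 + (ℓ xstar - ℓ x) * (C/δ₁) := by
      calc ∑ i, q i * (f (e i) - f xstar)
          ≤ ∑ i, (q i * (ε/2) + (q i * (ℓ xstar - ℓ (e i))) * (C/δ₁)) :=
            Finset.sum_le_sum fun i _ => hpt i
        _ = (∑ i, q i) * (ε/2) + (∑ i, q i * (ℓ xstar - ℓ (e i))) * (C/δ₁) := by
            rw [Finset.sum_add_distrib, Finset.sum_mul, Finset.sum_mul]
        _ = ε/2 + (ℓ xstar - ℓ x) * (C/δ₁) := by rw [hq1, one_mul, hkey]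
    have hδ2 : (ℓ xstar - ℓ x) * (C/δ₁) ≤ ε/2 := by
      have hδle : δ ≤ δ₁ * ε / (2 * C) := min_le_right _ _
      have h0 : 0 ≤ ℓ xstar - ℓ x := by
        have := hmax x hxK; linarith
      calc (ℓ xstar - ℓ x) * (C/δ₁) ≤ δ * (C/δ₁) :=
            mul_le_mul_of_nonneg_right hsum_le (by positivity)
        _ ≤ (δ₁ * ε / (2 * C)) * (C/δ₁) := mul_le_mul_of_nonneg_right hδle (by positivity)
        _ = ε/2 := by field_simp
    have hfinal : ∑ i, q i * (f (e i) - f xstar) ≤ ε := by linarith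
    have hexpand : ∑ i, q i * (f (e i) - f xstar) = (∑ i, q i * f (e i)) - f xstar := by
      rw [Finset.sum_congr rfl (fun i _ => mul_sub (q i) (f (e i)) (f xstar)),
        Finset.sum_sub_distrib, ← Finset.sum_mul, hq1, one_mul]
    rw [hexpand] at hfinal
    linarith
  have hlb : f xstar - ε ≤ G x := by
    have h1 := hjensen x hxK
    have h2 : f xstar - ε/2 ≤ f x := by
      have := (abs_lt.1 hfx).1
      linarith
    linarith
  rw [abs_sub_le_iff]
  constructor <;> linarith
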